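/- Let G be a 3-connected, cubic, bipartite graph with a non-trivial tight cut ∂X. Then every 2-factor of G contains exactly two edges of ∂X. -/

import Mathlib

open SimpleGraph

/-- A graph is cubic if every vertex has degree 3. -/
def IsCubic {V : Type*} (G : SimpleGraph V) : Prop :=
  ∀ v : V, (G.neighborSet v).ncard = 3

/-- A 2-factor of `G` is a 2-regular spanning subgraph of `G`. -/
def IsTwoFactor {V : Type*} (G : SimpleGraph V) (H : G.Subgraph) : Prop :=
  H.IsSpanning ∧ ∀ v : V, (H.neighborSet v).ncard = 2

/-- A graph is 2-factor Hamiltonian if every 2-factor of it is a Hamiltonian cycle,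
i.e. a connected 2-regular spanning subgraph. -/
def IsTwoFactorHamiltonian {V : Type*} (G : SimpleGraph V) : Prop :=
  ∀ H : G.Subgraph, IsTwoFactor G H → H.Connected

/-- A brace is a connected bipartite graph on at least four vertices in which every
matching of size at most two is contained in a perfect matching. -/
def IsBrace {V : Type*} (G : SimpleGraph V) : Prop :=
  G.Connected ∧ G.Colorable 2 ∧ 4 ≤ Nat.card V ∧
    ∀ M : G.Subgraph, M.IsMatching → M.edgeSet.ncard ≤ 2 →
      ∃ P : G.Subgraph, M ≤ P ∧ P.IsPerfectMatching

/-- The Heawood graph, as the point-line incidence graph of the Fano plane: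
points and lines are indexed by `Fin 7`, and point `p` lies on line `l` iff
`p + l ∈ {0, 1, 3}` (mod 7), `{0,1,3}` being a planar difference set mod 7. -/
def heawoodGraph : SimpleGraph (Fin 7 ⊕ Fin 7) :=
  SimpleGraph.fromRel fun a b => ∃ p l : Fin 7,
    a = Sum.inl p ∧ b = Sum.inr l ∧ (p + l = 0 ∨ p + l = 1 ∨ p + l = 3)

/-- A cycle (given as a closed walk) alternates between edges of the subgraph `M`
and edges not in `M`; the wrap-around pair is included by appending the first edge. -/
def IsAlternatingCycle {V : Type*} {G : SimpleGraph V} (M : G.Subgraph) {v : V}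
    (p : G.Walk v v) : Prop :=
  p.IsCycle ∧
    List.Chain' (fun e f => e ∈ M.edgeSet ↔ f ∉ M.edgeSet) (p.edges ++ p.edges.take 1)

/-- `σ` is a Pfaffian orientation of `G`: it orients every edge (exactly one direction),
and for every perfect matching `M` and every `M`-alternating cycle, the number of
its edges oriented in agreement with the direction of traversal is odd. -/
def IsPfaffianOrientation {V : Type*} (G : SimpleGraph V) (σ : V → V → Bool) : Prop :=
  (∀ u v : V, G.Adj u v → σ u v = !σ v u) ∧
  ∀ M : G.Subgraph, M.IsPerfectMatching →
    ∀ (v : V) (p : G.Walk v v), IsAlternatingCycle M p →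
      Odd (p.darts.filter fun d => σ d.toProd.1 d.toProd.2).length

/-- A graph with a perfect matching is Pfaffian if it admits a Pfaffian orientation. -/
def IsPfaffian {V : Type*} (G : SimpleGraph V) : Prop :=
  (∃ M : G.Subgraph, M.IsPerfectMatching) ∧ ∃ σ : V → V → Bool, IsPfaffianOrientation G σ

/-- The cut `∂X`: the set of edges of `G` with exactly one endpoint in `X`. -/
def edgeCut {V : Type*} (G : SimpleGraph V) (X : Set V) : Set (Sym2 V) :=
  {e | e ∈ G.edgeSet ∧ ∃ u w : V, e = s(u, w) ∧ u ∈ X ∧ w ∉ X}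

/-- A cut `∂X` is tight if every perfect matching contains exactly one of its edges. -/
def IsTightCut {V : Type*} (G : SimpleGraph V) (X : Set V) : Prop :=
  ∀ M : G.Subgraph, M.IsPerfectMatching → (edgeCut G X ∩ M.edgeSet).ncard = 1

/-- A cut `∂X` is trivial if `|X| = 1` or `|V(G) \ X| = 1`. -/
def IsTrivialCut {V : Type*} (X : Set V) : Prop :=
  X.ncard = 1 ∨ (Xᶜ : Set V).ncard = 1

/-- The tight cut contraction keeping `X`: contract `V(G) \ X` into a single vertex
(`Sum.inr ()`), deleting loops and parallel edges. -/
def contractOutside {V : Type*} (G : SimpleGraph V) (X : Set V) :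
    SimpleGraph (↥X ⊕ Unit) :=
  SimpleGraph.fromRel fun a b =>
    (∃ u v : X, a = Sum.inl u ∧ b = Sum.inl v ∧ G.Adj u v) ∨
    (∃ (u : X) (w : V), w ∉ X ∧ a = Sum.inl u ∧ b = Sum.inr () ∧ G.Adj u w)

/-- A graph is `k`-connected if it has more than `k` vertices and deleting any set of
fewer than `k` vertices leaves it connected. -/
def IsKConnected {V : Type*} (k : ℕ) (G : SimpleGraph V) : Prop :=
  k < Nat.card V ∧ ∀ S : Set V, S.ncard < k → (G.induce (Sᶜ : Set V)).Connected

/-- A graph is matching covered if it is connected, has an edge, and every edge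
lies in a perfect matching. -/
def IsMatchingCovered {V : Type*} (G : SimpleGraph V) : Prop :=
  G.Connected ∧ G.edgeSet.Nonempty ∧
    ∀ e ∈ G.edgeSet, ∃ M : G.Subgraph, M.IsPerfectMatching ∧ e ∈ M.edgeSet

/-- A graph is bridgeless if no edge is a bridge. -/
def Bridgeless {V : Type*} (G : SimpleGraph V) : Prop :=
  ∀ e : Sym2 V, ¬ G.IsBridge e

/-- `(A, B)` is a bipartition of `G` into the two colour classes `A` and `B`. -/
def IsBipartition {V : Type*} (G : SimpleGraph V) (A B : Set V) : Prop :=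
  A ∪ B = Set.univ ∧ Disjoint A B ∧
    ∀ u v : V, G.Adj u v → ((u ∈ A ∧ v ∈ B) ∨ (u ∈ B ∧ v ∈ A))

/-- `G` is the star product `(G1,v1)*(G2,v2)`, witnessed by the embeddings `f` of
`G1 - v1` and `g` of `G2 - v2` into `G`, and the bijection `m` matching the three
neighbours of `v1` to the three neighbours of `v2`: `v1` and `v2` have degree 3,
the images of `f` and `g` partition the vertices of `G`, and the edges of `G` are
exactly the edges of `G1 - v1`, the edges of `G2 - v2`, and the three matching edges
`f x — g (m x)` for `x` a neighbour of `v1`. -/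
def IsStarProductWitness {V V1 V2 : Type*} (G : SimpleGraph V)
    (G1 : SimpleGraph V1) (v1 : V1) (G2 : SimpleGraph V2) (v2 : V2)
    (f : V1 → V) (g : V2 → V) (m : V1 → V2) : Prop :=
  (G1.neighborSet v1).ncard = 3 ∧ (G2.neighborSet v2).ncard = 3 ∧
  Set.InjOn f {x | x ≠ v1} ∧ Set.InjOn g {y | y ≠ v2} ∧
  (∀ x y, x ≠ v1 → y ≠ v2 → f x ≠ g y) ∧
  (∀ v : V, (∃ x, x ≠ v1 ∧ f x = v) ∨ (∃ y, y ≠ v2 ∧ g y = v)) ∧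
  Set.BijOn m (G1.neighborSet v1) (G2.neighborSet v2) ∧
  (∀ a b : V, G.Adj a b ↔
    ((∃ x y, x ≠ v1 ∧ y ≠ v1 ∧ G1.Adj x y ∧ a = f x ∧ b = f y) ∨
     (∃ x y, x ≠ v2 ∧ y ≠ v2 ∧ G2.Adj x y ∧ a = g x ∧ b = g y) ∨
     (∃ x, G1.Adj v1 x ∧ ((a = f x ∧ b = g (m x)) ∨ (b = f x ∧ a = g (m x))))))

/-- `G` is a star product `(G1,v1)*(G2,v2)`. -/
def IsStarProduct {V V1 V2 : Type*} (G : SimpleGraph V)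
    (G1 : SimpleGraph V1) (v1 : V1) (G2 : SimpleGraph V2) (v2 : V2) : Prop :=
  ∃ (f : V1 → V) (g : V2 → V) (m : V1 → V2),
    IsStarProductWitness G G1 v1 G2 v2 f g m

/-- The principal 3-edge cut of a star product: the three added matching edges. -/
def principalCut {V V1 V2 : Type*} (G1 : SimpleGraph V1) (v1 : V1)
    (f : V1 → V) (g : V2 → V) (m : V1 → V2) : Set (Sym2 V) :=
  {e | ∃ x, G1.Adj v1 x ∧ e = s(f x, g (m x))}

/-- Let `G` be a 3-connected, cubic, bipartite graph with a
non-trivial tight cut `∂X`. Then every 2-factor of `G` contains exactly two edges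
of `∂X`. -/
theorem twoFactor_meets_tightCut_twice {V : Type*} [Fintype V]
    (G : SimpleGraph V) (X : Set V)
    (h3con : IsKConnected 3 G) (hcubic : IsCubic G) (hbip : G.Colorable 2)
    (htight : IsTightCut G X) (hnontriv : ¬ IsTrivialCut X) :
    ∀ F : G.Subgraph, IsTwoFactor G F → (edgeCut G X ∩ F.edgeSet).ncard = 2 := by
  classical
  intro F hF
  obtain ⟨hspan, hdeg⟩ := hF
  obtain ⟨C⟩ := hbip
  -- Hall's condition for the 2-regular subgraph F
  have hcard : ∀ v : V, (F.neighborSet v).toFinset.card = 2 := by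
    intro v
    rw [← Set.ncard_eq_toFinset_card']
    exact hdeg v
  have hHall : ∀ s : Finset V,
      s.card ≤ (s.biUnion fun a => (F.neighborSet a).toFinset).card := by
    intro s
    set t := s.biUnion fun a => (F.neighborSet a).toFinset with ht
    have key : s.card * 2 ≤ t.card * 2 := by
      apply Finset.card_mul_le_card_mul (fun a b => F.Adj a b)
      · intro a ha
        have hsub : (F.neighborSet a).toFinset ⊆
            t.bipartiteAbove (fun a b => F.Adj a b) a := by
          intro b hb
          rw [Finset.mem_bipartiteAbove]
          refine ⟨Finset.mem_biUnion.mpr ⟨a, ha, hb⟩, ?_⟩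
          simpa [Set.mem_toFinset] using hb
        calc 2 = (F.neighborSet a).toFinset.card := (hcard a).symm
          _ ≤ _ := Finset.card_le_card hsub
      · intro b _
        have hsub : Finset.bipartiteBelow (fun a b => F.Adj a b) s b ⊆
            (F.neighborSet b).toFinset := by
          intro a ha
          rw [Finset.mem_bipartiteBelow] at ha
          simp only [Set.mem_toFinset, SimpleGraph.Subgraph.mem_neighborSet]
          exact ha.2.symm
        calc _ ≤ (F.neighborSet b).toFinset.card := Finset.card_le_card hsub
          _ = 2 := hcard b
    omega
  obtain ⟨f, hfinj, hf⟩ :=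
    (Finset.all_card_le_biUnion_card_iff_exists_injective _).mp hHall
  have hfadj : ∀ v, F.Adj v (f v) := by
    intro v
    have := hf v
    simpa [Set.mem_toFinset] using this
  have hfbij : Function.Bijective f := Finite.injective_iff_bijective.mp hfinj
  -- colors
  have hC : ∀ u v, F.Adj u v → C u ≠ C v := fun u v h => C.valid (F.adj_sub h)
  have hfin2 : ∀ x : Fin 2, x = 0 ∨ x = 1 := by decide
  have hflip : ∀ v, C v = 0 → C (f v) = 1 := by
    intro v hv
    rcases hfin2 (C (f v)) with h | h
    · exact absurd (hv.trans h.symm) (hC v (f v) (hfadj v))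
    · exact h
  have hflip' : ∀ v, C v = 1 → C (f v) = 0 := by
    intro v hv
    rcases hfin2 (C (f v)) with h | h
    · exact h
    · exact absurd (hv.trans h.symm) (hC v (f v) (hfadj v))
  -- |A| = |B| and f maps B-preimage
  set e := Equiv.ofBijective f hfbij with he
  have hfe : ∀ v, e v = f v := fun v => rfl
  have hApre : ∀ v, C v = 1 → C (e.symm v) = 0 := by
    -- f maps A into B and B into A bijectively; counting
    set As : Finset V := Finset.univ.filter (fun v => C v = 0) with hAs
    set Bs : Finset V := Finset.univ.filter (fun v => C v = 1) with hBs
    have hAB : As.image f ⊆ Bs := by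
      intro b hb
      obtain ⟨a, ha, rfl⟩ := Finset.mem_image.mp hb
      simp only [hAs, Finset.mem_filter] at ha
      simp only [hBs, Finset.mem_filter]
      exact ⟨Finset.mem_univ _, hflip a ha.2⟩
    have hBA : Bs.image f ⊆ As := by
      intro b hb
      obtain ⟨a, ha, rfl⟩ := Finset.mem_image.mp hb
      simp only [hBs, Finset.mem_filter] at ha
      simp only [hAs, Finset.mem_filter]
      exact ⟨Finset.mem_univ _, hflip' a ha.2⟩
    have h1 : As.card ≤ Bs.card := by
      calc As.card = (As.image f).card := (Finset.card_image_of_injective _ hfinj).symm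
        _ ≤ Bs.card := Finset.card_le_card hAB
    have h2 : Bs.card ≤ As.card := by
      calc Bs.card = (Bs.image f).card := (Finset.card_image_of_injective _ hfinj).symm
        _ ≤ As.card := Finset.card_le_card hBA
    have himg : As.image f = Bs := by
      apply Finset.eq_of_subset_of_card_le hAB
      rw [Finset.card_image_of_injective _ hfinj]; omega
    intro v hv
    have hvB : v ∈ Bs := by simp [hBs, hv]
    rw [← himg] at hvB
    obtain ⟨a, ha, hav⟩ := Finset.mem_image.mp hvB
    simp only [hAs, Finset.mem_filter] at ha
    have : e.symm v = a := by
      apply e.injective; rw [Equiv.apply_symm_apply, hfe, hav]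
    rw [this]; exact ha.2
  -- the matching partner function
  set h : V → V := fun v => if C v = 0 then f v else e.symm v with hh
  have hCv1 : ∀ v, C v ≠ 0 → C v = 1 := fun v hv => (hfin2 (C v)).resolve_left hv
  have hadjh : ∀ v, F.Adj v (h v) := by
    intro v
    by_cases hv : C v = 0
    · simp only [hh, if_pos hv]; exact hfadj v
    · simp only [hh, if_neg hv]
      have h1 : f (e.symm v) = v := e.apply_symm_apply v
      have h2 := hfadj (e.symm v)
      rw [h1] at h2
      exact h2.symm
  have hinv : ∀ v, h (h v) = v := by
    intro v
    by_cases hv : C v = 0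
    · have h1 : C (f v) = 1 := hflip v hv
      have hne : ¬ C (f v) = 0 := by rw [h1]; exact one_ne_zero
      simp only [hh, if_pos hv, if_neg hne]
      exact e.symm_apply_apply v
    · have hv1 : C v = 1 := hCv1 v hv
      have h0 : C (e.symm v) = 0 := hApre v hv1
      simp only [hh, if_neg hv, if_pos h0]
      exact e.apply_symm_apply v
  -- define the two matchings
  set M1 : G.Subgraph :=
    { verts := Set.univ
      Adj := fun u v => F.Adj u v ∧ h u = v ∧ h v = u
      adj_sub := fun ha => F.adj_sub ha.1
      edge_vert := fun _ => Set.mem_univ _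
      symm := ⟨fun u v ⟨ha, h1, h2⟩ => ⟨ha.symm, h2, h1⟩⟩ } with hM1
  set M2 : G.Subgraph :=
    { verts := Set.univ
      Adj := fun u v => F.Adj u v ∧ h u ≠ v
      adj_sub := fun ha => F.adj_sub ha.1
      edge_vert := fun _ => Set.mem_univ _
      symm := by
        constructor
        rintro u v ⟨ha, h1⟩
        refine ⟨ha.symm, fun hc => h1 ?_⟩
        rw [← hc, hinv] } with hM2
  -- M1.Adj u v ↔ F.Adj u v ∧ h u = v
  have hM1adj : ∀ u v, M1.Adj u v ↔ F.Adj u v ∧ h u = v := by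
    intro u v
    constructor
    · rintro ⟨ha, h1, _⟩; exact ⟨ha, h1⟩
    · rintro ⟨ha, h1⟩; exact ⟨ha, h1, by rw [← h1, hinv]⟩
  have hM1pm : M1.IsPerfectMatching := by
    constructor
    · intro v _
      refine ⟨h v, (hM1adj v (h v)).mpr ⟨hadjh v, rfl⟩, ?_⟩
      intro w hw
      exact ((hM1adj v w).mp hw).2.symm
    · intro v; exact Set.mem_univ _
  have hM2pm : M2.IsPerfectMatching := by
    constructor
    · intro v _
      -- F.neighborSet v has two elements, one is h v
      obtain ⟨a, b, hab, habs⟩ := Set.ncard_eq_two.mp (hdeg v)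
      have hhv : h v ∈ F.neighborSet v := hadjh v
      rw [habs] at hhv
      -- let w be the element of {a,b} different from h v
      rcases hhv with rfl | rfl
      · refine ⟨b, ⟨?_, ?_⟩, ?_⟩
        · have : b ∈ F.neighborSet v := by rw [habs]; right; rfl
          exact this
        · exact hab
        · rintro y ⟨hy, hy2⟩
          have : y ∈ F.neighborSet v := hy
          rw [habs] at this
          rcases this with rfl | rfl
          · exact absurd rfl hy2
          · rfl
      · refine ⟨a, ⟨?_, ?_⟩, ?_⟩
        · have : a ∈ F.neighborSet v := by rw [habs]; left; rfl
          exact this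
        · exact fun hc => hab hc.symm
        · rintro y ⟨hy, hy2⟩
          have : y ∈ F.neighborSet v := hy
          rw [habs] at this
          rcases this with rfl | rfl
          · rfl
          · exact absurd rfl hy2
    · intro v; exact Set.mem_univ _
  -- edge sets partition
  have hunion : edgeCut G X ∩ F.edgeSet =
      (edgeCut G X ∩ M1.edgeSet) ∪ (edgeCut G X ∩ M2.edgeSet) := by
    ext e'
    induction e' using Sym2.ind with
    | _ u v =>
      simp only [Set.mem_inter_iff, Set.mem_union, SimpleGraph.Subgraph.mem_edgeSet]
      constructor
      · rintro ⟨hc, ha⟩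
        by_cases hu : h u = v
        · exact Or.inl ⟨hc, (hM1adj u v).mpr ⟨ha, hu⟩⟩
        · exact Or.inr ⟨hc, ha, hu⟩
      · rintro (⟨hc, ha⟩ | ⟨hc, ha, _⟩)
        · exact ⟨hc, ((hM1adj u v).mp ha).1⟩
        · exact ⟨hc, ha⟩
  have hdisj : Disjoint (edgeCut G X ∩ M1.edgeSet) (edgeCut G X ∩ M2.edgeSet) := by
    rw [Set.disjoint_left]
    intro e' he1 he2
    induction e' using Sym2.ind with
    | _ u v =>
      have h1 := he1.2
      have h2 := he2.2
      rw [SimpleGraph.Subgraph.mem_edgeSet] at h1 h2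
      exact h2.2 ((hM1adj u v).mp h1).2
  rw [hunion, Set.ncard_union_eq hdisj (Set.toFinite _) (Set.toFinite _),
    htight M1 hM1pm, htight M2 hM2pm]
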